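/- Let f(x) = (x - ζ₁) g(x) be a complex polynomial of degree d with g of degree d - 1. Then ‖g‖_d ≤ (√d / √(1 + |ζ₁|²)) · ‖f‖_d, where ‖·‖_d is the Weyl norm on polynomials of degree at most d. -/

import Mathlib

open Polynomial Finset

/-- The Weyl (Bombieri) norm on polynomials of degree at most `m`. -/
noncomputable def weylNorm (m : ℕ) (p : Polynomial ℂ) : ℝ :=
  Real.sqrt (∑ i ∈ Finset.range (m + 1), ‖p.coeff i‖ ^ 2 / (Nat.choose m i))

private lemma choose_id1 (d j : ℕ) (hj : j < d) :
    (d : ℝ) / (Nat.choose d (j+1)) = ((j:ℝ)+1) / (Nat.choose (d-1) j) := by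
  have h := Nat.add_one_mul_choose_eq (d-1) j
  have hd1 : d - 1 + 1 = d := by omega
  rw [hd1] at h
  have hc1 : 0 < Nat.choose (d-1) j := Nat.choose_pos (by omega)
  have hc2 : 0 < Nat.choose d (j+1) := Nat.choose_pos (by omega)
  rw [div_eq_div_iff (by positivity) (by positivity)]
  have hR : (d:ℝ) * ((d-1).choose j) = (d.choose (j+1)) * ((j:ℝ)+1) := by exact_mod_cast h
  rw [hR]; ring

private lemma choose_id2 (d j : ℕ) (hj : j < d) :
    (d : ℝ) / (Nat.choose d j) = ((d : ℝ) - j) / (Nat.choose (d-1) j) := by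
  have h1 := Nat.add_one_mul_choose_eq (d-1) j
  have hd1 : d - 1 + 1 = d := by omega
  rw [hd1] at h1
  have h2 := Nat.choose_succ_right_eq d j
  have h : d * Nat.choose (d-1) j = Nat.choose d j * (d - j) := by omega
  have hc1 : 0 < Nat.choose (d-1) j := Nat.choose_pos (by omega)
  have hc2 : 0 < Nat.choose d j := Nat.choose_pos (by omega)
  rw [div_eq_div_iff (by positivity) (by positivity)]
  have this1 : ((d - j : ℕ) : ℝ) = (d : ℝ) - j := by
    push_cast [Nat.cast_sub hj.le]; ring
  have hR : (d:ℝ) * ((d-1).choose j) = (d.choose j) * (((d:ℕ) - j : ℕ) : ℝ) := by exact_mod_cast h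
  rw [this1] at hR
  rw [hR]; ring

private lemma amgm (u v w : ℂ) (A B W : ℝ) (hA : 0 ≤ A) (hB : 0 ≤ B) (hW : 0 ≤ W)
    (h : Complex.normSq w * W ^ 2 = A * B) :
    W * (2 * (u * (starRingEnd ℂ) (w * v)).re) ≤ A * Complex.normSq u + B * Complex.normSq v := by
  have h1 : (u * (starRingEnd ℂ) (w * v)).re ≤
      ‖u‖ * (‖w‖ * ‖v‖) := by
    calc (u * (starRingEnd ℂ) (w * v)).re ≤ ‖u * (starRingEnd ℂ) (w * v)‖ :=
          Complex.re_le_norm _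
    _ = ‖u‖ * (‖w‖ * ‖v‖) := by
          rw [norm_mul, Complex.norm_conj, norm_mul]
  have hsq : (W * ‖w‖) ^ 2 = A * B := by
    rw [← Complex.sq_norm] at h; nlinarith [h]
  have hWc : W * ‖w‖ = Real.sqrt A * Real.sqrt B := by
    rw [← Real.sqrt_mul_self (by positivity : 0 ≤ W * ‖w‖)]
    rw [← Real.sqrt_mul hA]
    congr 1; nlinarith [hsq]
  have hu := Complex.sq_norm u
  have hv := Complex.sq_norm v
  nlinarith [sq_nonneg (Real.sqrt A * ‖u‖ - Real.sqrt B * ‖v‖),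
    Real.sq_sqrt hA, Real.sq_sqrt hB, norm_nonneg u, norm_nonneg v,
    mul_nonneg (norm_nonneg u) (norm_nonneg v),
    mul_le_mul_of_nonneg_left h1 (by positivity : (0:ℝ) ≤ 2 * W)]

/-- If `f = (x - ζ₁) g` has degree `d` with `deg g = d - 1`, then
`‖g‖_d ≤ (√d / √(1+|ζ₁|²)) ‖f‖_d`. -/
theorem weylNorm_factor_le_same_degree (d : ℕ) (hd : 1 ≤ d) (ζ₁ : ℂ)
    (f g : Polynomial ℂ)
    (hf : f = (X - C ζ₁) * g) (hgdeg : g.natDegree = d - 1) :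
    weylNorm d g ≤
      (Real.sqrt d / Real.sqrt (1 + ‖ζ₁‖ ^ 2)) * weylNorm d f := by
  set z : ℝ := Complex.normSq ζ₁ with hz
  have hz0 : 0 ≤ z := Complex.normSq_nonneg _
  set a : ℕ → ℂ := fun j => g.coeff j with ha
  have hatop : ∀ j, d ≤ j → a j = 0 := by
    intro j hj
    exact Polynomial.coeff_eq_zero_of_natDegree_lt (by omega)
  set s : ℕ → ℂ := fun i => if i = 0 then 0 else a (i-1) with hs
  have hfc : ∀ i, f.coeff i = s i - ζ₁ * a i := by
    intro i
    rw [hf, sub_mul, Polynomial.coeff_sub, Polynomial.coeff_C_mul]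
    congr 1
    cases i with
    | zero => simp [hs]
    | succ m => simp [hs, ha, Polynomial.coeff_X_mul]
  set nq : ℕ → ℝ := fun j => Complex.normSq (a j) with hnq
  have hn0 : ∀ j, 0 ≤ nq j := fun j => Complex.normSq_nonneg _
  set c : ℕ → ℝ := fun j => ((Nat.choose (d-1) j : ℕ) : ℝ) with hc
  have hcpos : ∀ j, j < d → 0 < c j := by
    intro j hj
    have h : 0 < Nat.choose (d-1) j := Nat.choose_pos (by omega)
    simp only [hc]
    exact_mod_cast h
  set F : ℝ := ∑ i ∈ range (d+1), Complex.normSq (f.coeff i) / (Nat.choose d i) with hF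
  set G : ℝ := ∑ i ∈ range (d+1), nq i / (Nat.choose d i) with hG
  set G' : ℝ := ∑ j ∈ range d, nq j / c j with hG'
  -- Step 1 : G ≤ G'
  have key1 : G ≤ G' := by
    rw [hG, Finset.sum_range_succ]
    have hlast : nq d / ((Nat.choose d d : ℕ) : ℝ) = 0 := by
      rw [hnq]; simp [hatop d le_rfl]
    rw [hlast, add_zero]
    apply Finset.sum_le_sum
    intro j hj
    have hjd : j < d := Finset.mem_range.mp hj
    have hle : (Nat.choose (d-1) j : ℝ) ≤ (Nat.choose d j : ℝ) := by
      exact_mod_cast Nat.choose_le_choose j (Nat.sub_le d 1)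
    exact div_le_div_of_nonneg_left (hn0 j) (hcpos j hjd) hle
  -- Expansion of d * F
  set T1 : ℝ := ∑ i ∈ range (d+1), ((d:ℝ)/(Nat.choose d i)) * Complex.normSq (s i) with hT1
  set T2 : ℝ := ∑ i ∈ range (d+1), ((d:ℝ)/(Nat.choose d i)) * (z * nq i) with hT2
  set T3 : ℝ := ∑ i ∈ range (d+1), ((d:ℝ)/(Nat.choose d i)) *
      (2 * (s i * (starRingEnd ℂ) (ζ₁ * a i)).re) with hT3
  have expand : (d:ℝ) * F = T1 + T2 - T3 := by
    rw [hF, Finset.mul_sum, hT1, hT2, hT3, ← Finset.sum_add_distrib, ← Finset.sum_sub_distrib]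
    apply Finset.sum_congr rfl
    intro i _
    rw [hfc i, Complex.normSq_sub, Complex.normSq_mul]
    rw [hnq, hz]
    ring
  -- T1 in shifted form
  have hT1' : T1 = ∑ j ∈ range d, (((j:ℝ)+1)/c j) * nq j := by
    rw [hT1, Finset.sum_range_succ']
    have h0 : ((d:ℝ)/(Nat.choose d 0)) * Complex.normSq (s 0) = 0 := by
      simp [hs]
    rw [h0, add_zero]
    apply Finset.sum_congr rfl
    intro j hj
    have hjd : j < d := Finset.mem_range.mp hj
    rw [choose_id1 d j hjd]
    congr 1
  -- T2 in range-d form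
  have hT2' : T2 = ∑ j ∈ range d, (((d:ℝ)-j)/c j) * (z * nq j) := by
    rw [hT2, Finset.sum_range_succ]
    have hlast : ((d:ℝ)/(Nat.choose d d)) * (z * nq d) = 0 := by
      rw [hnq]; simp [hatop d le_rfl]
    rw [hlast, add_zero]
    apply Finset.sum_congr rfl
    intro j hj
    rw [choose_id2 d j (Finset.mem_range.mp hj)]
  -- bound on T3
  have hT3' : T3 ≤ (∑ j ∈ range d, (z * ((d:ℝ)-(j+1)) / c j) * nq j)
      + ∑ j ∈ range d, (((j:ℝ)/c j) * nq j) := by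
    have step : T3 ≤ ∑ i ∈ range (d+1),
        ((z * ((d:ℝ)-i) / ((Nat.choose (d-1) (i-1) : ℕ) : ℝ)) * Complex.normSq (s i)
          + (((i:ℝ)/c i) * nq i)) := by
      rw [hT3]
      apply Finset.sum_le_sum
      intro i hi
      have hid : i < d + 1 := Finset.mem_range.mp hi
      rcases Nat.eq_zero_or_pos i with h0 | hpos
      · subst h0
        simp [hs]
      rcases eq_or_lt_of_le (Nat.lt_succ_iff.mp hid) with hieq | hilt
      · -- i = d
        have had : a i = 0 := hatop i (le_of_eq hieq.symm)
        have hdi : (d:ℝ) - i = 0 := by rw [hieq]; ring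
        rw [had, hdi]
        simp [hnq, had]
      · -- 1 ≤ i < d
        have hi1 : i - 1 + 1 = i := by omega
        have hW1 : (d:ℝ)/(Nat.choose d i) = ((i:ℝ))/(Nat.choose (d-1) (i-1)) := by
          have := choose_id1 d (i-1) (by omega)
          rw [hi1] at this
          have hcast : ((i-1 : ℕ):ℝ) + 1 = (i:ℝ) := by
            have : ((i-1 : ℕ):ℝ) = (i:ℝ) - 1 := by
              push_cast [Nat.cast_sub hpos]; ring
            rw [this]; ring
          rw [hcast] at this
          exact this
        have hW2 : (d:ℝ)/(Nat.choose d i) = ((d:ℝ)-i)/c i := choose_id2 d i hilt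
        apply amgm (s i) (a i) ζ₁ _ _ _
        · have hdi : (0:ℝ) ≤ (d:ℝ) - i := by
            have : (i:ℝ) ≤ (d:ℝ) := by exact_mod_cast hilt.le
            linarith
          apply div_nonneg (mul_nonneg hz0 hdi) (by positivity)
        · apply div_nonneg (by positivity) (le_of_lt (hcpos i hilt))
        · positivity
        · rw [pow_two]
          nth_rewrite 1 [hW2]
          rw [hW1]
          field_simp
          ring
    refine le_trans step ?_
    rw [Finset.sum_add_distrib]
    apply add_le_add
    · -- reindex the P-sum
      rw [Finset.sum_range_succ']
      have h0 : (z * ((d:ℝ)-(0:ℕ)) / ((Nat.choose (d-1) (0-1) : ℕ) : ℝ)) *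
          Complex.normSq (s 0) = 0 := by simp [hs]
      rw [h0, add_zero]
      apply le_of_eq
      apply Finset.sum_congr rfl
      intro j _
      have h1 : s (j+1) = a j := by simp [hs]
      have h2 : (j+1) - 1 = j := by omega
      rw [h1, h2]
      push_cast
      rw [hnq, hc]
    · -- drop last term of Q-sum
      rw [Finset.sum_range_succ]
      have hlast : ((d:ℝ)/c d) * nq d = 0 := by
        rw [hnq]; simp [hatop d le_rfl]
      rw [hlast, add_zero]
  -- Step 2 : (1+z) * G' ≤ d * F
  have key2 : (1 + z) * G' ≤ (d:ℝ) * F := by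
    rw [expand, hT1', hT2']
    have hcomb : (1 + z) * G' = ∑ j ∈ range d,
        ((((j:ℝ)+1)/c j) * nq j + (((d:ℝ)-j)/c j) * (z * nq j)
          - ((z * ((d:ℝ)-(j+1)) / c j) * nq j + ((j:ℝ)/c j) * nq j)) := by
      rw [hG', Finset.mul_sum]
      apply Finset.sum_congr rfl
      intro j hj
      have hcj : c j ≠ 0 := ne_of_gt (hcpos j (Finset.mem_range.mp hj))
      field_simp
      ring
    rw [hcomb, Finset.sum_sub_distrib, Finset.sum_add_distrib, Finset.sum_add_distrib]
    have := hT3'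
    linarith
  -- Assemble
  have h1z : (0:ℝ) < 1 + z := by linarith
  have hF0 : 0 ≤ F := by
    rw [hF]
    apply Finset.sum_nonneg
    intro i _
    exact div_nonneg (Complex.normSq_nonneg _) (Nat.cast_nonneg _)
  have hGle : G ≤ ((d:ℝ)/(1+z)) * F := by
    rw [div_mul_eq_mul_div, le_div_iff₀ h1z]
    calc G * (1+z) = (1+z) * G := by ring
    _ ≤ (1+z) * G' := by
        apply mul_le_mul_of_nonneg_left key1 (le_of_lt h1z)
    _ ≤ (d:ℝ) * F := key2
  have hwg : weylNorm d g = Real.sqrt G := by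
    rw [weylNorm, hG]
    congr 1
    apply Finset.sum_congr rfl
    intro i _
    rw [Complex.sq_norm, hnq]
  have hwf : weylNorm d f = Real.sqrt F := by
    rw [weylNorm, hF]
    congr 1
    apply Finset.sum_congr rfl
    intro i _
    rw [Complex.sq_norm]
  rw [hwg, hwf]
  have habs : 1 + ‖ζ₁‖ ^ 2 = 1 + z := by rw [Complex.sq_norm]
  rw [habs]
  calc Real.sqrt G ≤ Real.sqrt (((d:ℝ)/(1+z)) * F) := Real.sqrt_le_sqrt hGle
  _ = Real.sqrt ((d:ℝ)/(1+z)) * Real.sqrt F := Real.sqrt_mul (div_nonneg (Nat.cast_nonneg d) (le_of_lt h1z)) F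
  _ = (Real.sqrt d / Real.sqrt (1+z)) * Real.sqrt F := by
      rw [Real.sqrt_div (by positivity : (0:ℝ) ≤ (d:ℝ))]
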